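/- Let S be the three-element partial order {p₀, p₁, q} in which q < p₀, q < p₁, and p₀, p₁ are incomparable. Let P = WithTop (S × Finset ℕ), where S × Finset ℕ carries the product order (Finset ℕ ordered by inclusion) and the added top element ⊤ is above everything; the bottom element of P is ⊥ = (q, ∅). Say that b is a complement of a in P if b ≠ a, there is no c with a ≤ c, b ≤ c and c < ⊤, and there is no c with c ≤ a, c ≤ b and ⊥ < c. Then a non-top element (u, D) of P has a complement if and only if u ≠ q or D = ∅. In particular, (p₀, D) has complement (p₁, ∅) for every D, and (q, D) has no complement whenever D ≠ ∅. -/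

import Mathlib

/-- The three-element poset `{p₀, p₁, q}` with `q < p₀`, `q < p₁`. -/
inductive S
  | p0 | p1 | q
deriving DecidableEq

instance : PartialOrder S where
  le a b := a = b ∨ a = S.q
  le_refl a := Or.inl rfl
  le_trans a b c hab hbc := by
    rcases hab with rfl | rfl
    · exact hbc
    · exact Or.inr rfl
  le_antisymm a b hab hba := by
    rcases hab with rfl | rfl
    · rfl
    · rcases hba with rfl | rfl <;> rfl

/-- The bounded poset `P = WithTop (S × Finset ℕ)`, with bottom element `(q, ∅)`. -/
abbrev P := WithTop (S × Finset ℕ)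

/-- The bottom element of `P`. -/
def Pbot : P := ((S.q, (∅ : Finset ℕ)) : S × Finset ℕ)

/-- `b` is a complement of `a` in `P`: `b ≠ a`, they have no common upper bound
below `⊤` and no common lower bound above `(q, ∅)`. -/
def IsComplement (a b : P) : Prop :=
  b ≠ a ∧ (¬ ∃ c : P, a ≤ c ∧ b ≤ c ∧ c < ⊤) ∧ (¬ ∃ c : P, c ≤ a ∧ c ≤ b ∧ Pbot < c)

lemma key_comp (u v : S) (huv : u ≠ v) (huq : u ≠ S.q) (hvq : v ≠ S.q) (D : Finset ℕ) :
    IsComplement (((u, D) : S × Finset ℕ) : P) (((v, (∅ : Finset ℕ)) : S × Finset ℕ) : P) := by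
  refine ⟨?_, ?_, ?_⟩
  · intro h
    exact huv ((Prod.mk.injEq _ _ _ _).mp (WithTop.coe_injective h)).1.symm
  · rintro ⟨c, hac, hbc, hct⟩
    lift c to S × Finset ℕ using hct.ne
    obtain ⟨w, E⟩ := c
    have h1 := (WithTop.coe_le_coe.mp hac).1
    have h2 := (WithTop.coe_le_coe.mp hbc).1
    rcases h1 with rfl | rfl
    · rcases h2 with rfl | rfl
      · exact huv rfl
      · exact hvq rfl
    · exact huq rfl
  · rintro ⟨c, hca, hcb, hbc⟩
    have hct : c ≠ ⊤ := by
      intro h; subst h; simp at hca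
    lift c to S × Finset ℕ using hct
    obtain ⟨w, E⟩ := c
    have h1 := WithTop.coe_le_coe.mp hca
    have h2 := WithTop.coe_le_coe.mp hcb
    have hE : E = ∅ := Finset.subset_empty.mp h2.2
    have hw : w = S.q := by
      rcases h1.1 with rfl | rfl
      · rcases h2.1 with rfl | rfl
        · exact absurd rfl huv
        · rfl
      · rfl
    subst hE hw
    exact lt_irrefl _ hbc

lemma bot_comp : IsComplement Pbot (⊤ : P) := by
  refine ⟨?_, ?_, ?_⟩
  · intro h; exact (WithTop.coe_ne_top (a := (S.q, (∅ : Finset ℕ)))) h.symm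
  · rintro ⟨c, _, hbc, hct⟩
    exact absurd (top_le_iff.mp hbc) hct.ne
  · rintro ⟨c, hca, _, hbc⟩
    exact absurd (le_antisymm hca hbc.le).symm hbc.ne

lemma no_comp_q (D : Finset ℕ) (hD : D ≠ ∅) :
    ¬ ∃ b : P, IsComplement (((S.q, D) : S × Finset ℕ) : P) b := by
  rintro ⟨b, hne, hup, hlo⟩
  cases b with
  | none =>
      apply hlo
      refine ⟨((S.q, D) : S × Finset ℕ), le_refl _, le_top, ?_⟩
      refine lt_of_le_of_ne (WithTop.coe_le_coe.mpr ⟨Or.inl rfl, Finset.empty_subset _⟩) ?_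
      intro h
      exact hD ((Prod.mk.injEq _ _ _ _).mp (WithTop.coe_injective h)).2.symm
  | some vE =>
      obtain ⟨v, E⟩ := vE
      apply hup
      refine ⟨((v, D ∪ E) : S × Finset ℕ), ?_, ?_, WithTop.coe_lt_top _⟩
      · exact WithTop.coe_le_coe.mpr ⟨Or.inr rfl, Finset.subset_union_left⟩
      · exact WithTop.coe_le_coe.mpr ⟨Or.inl rfl, Finset.subset_union_right⟩

/-- a non-top element `(u, D)` of `P` has a complement iff `u ≠ q` or
`D = ∅`; in particular `(p₀, D)` has complement `(p₁, ∅)`, and `(q, D)` has no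
complement whenever `D ≠ ∅`. -/
theorem stmt_8 :
    (∀ (u : S) (D : Finset ℕ),
      (∃ b : P, IsComplement (((u, D) : S × Finset ℕ) : P) b) ↔ (u ≠ S.q ∨ D = ∅)) ∧
    (∀ D : Finset ℕ,
      IsComplement (((S.p0, D) : S × Finset ℕ) : P) (((S.p1, (∅ : Finset ℕ)) : S × Finset ℕ) : P)) ∧
    (∀ D : Finset ℕ, D ≠ ∅ →
      ¬ ∃ b : P, IsComplement (((S.q, D) : S × Finset ℕ) : P) b) := by
  refine ⟨?_, fun D => key_comp S.p0 S.p1 (by simp) (by simp) (by simp) D, no_comp_q⟩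
  intro u D
  constructor
  · rintro ⟨b, hb⟩
    by_contra h
    push_neg at h
    obtain ⟨hq, hD⟩ := h
    
    subst hq
    exact no_comp_q D hD.ne_empty ⟨b, hb⟩
  · rintro (hu | rfl)
    · cases u with
      | p0 => exact ⟨_, key_comp S.p0 S.p1 (by simp) (by simp) (by simp) D⟩
      | p1 => exact ⟨_, key_comp S.p1 S.p0 (by simp) (by simp) (by simp) D⟩
      | q => exact absurd rfl hu
    · cases u with
      | p0 => exact ⟨_, key_comp S.p0 S.p1 (by simp) (by simp) (by simp) ∅⟩
      | p1 => exact ⟨_, key_comp S.p1 S.p0 (by simp) (by simp) (by simp) ∅⟩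
      | q => exact ⟨⊤, bot_comp⟩
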